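/- Every partition of an integer n ≥ 4 is uniquely determined by its set of lower covers in Young's lattice: if |π| = |σ| = n ≥ 4 and π and σ have the same set of lower covers, then π = σ. -/

import Mathlib

/-- A partition: a weakly decreasing sequence of naturals with finite support. -/
structure YPart where
  f : ℕ → ℕ
  mono : ∀ i j : ℕ, i ≤ j → f j ≤ f i
  fin : ∃ N : ℕ, ∀ i : ℕ, N ≤ i → f i = 0

namespace YPart

theorem ext' {σ π : YPart} (h : σ.f = π.f) : σ = π := by
  cases σ; cases π; cases h; rfl

/-- The Young order: containment of diagrams, i.e. pointwise comparison. -/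
instance : PartialOrder YPart where
  le σ π := ∀ i, σ.f i ≤ π.f i
  le_refl σ i := le_refl _
  le_trans a b c hab hbc i := (hab i).trans (hbc i)
  le_antisymm a b hab hba := ext' (funext fun i => le_antisymm (hab i) (hba i))

noncomputable def card (π : YPart) : ℕ := ∑' i, π.f i

noncomputable def length (π : YPart) : ℕ := Nat.card {i : ℕ | 0 < π.f i}

noncomputable def mult (π : YPart) (r : ℕ) : ℕ := Nat.card {i : ℕ | π.f i = r}

/-- The rectangular partition `m[n]`: `m` parts of size `n`. -/
def rect (m n : ℕ) : YPart where
  f i := if i < m then n else 0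
  mono := by intro i j hij; split_ifs <;> omega
  fin := ⟨m, fun i hi => by split_ifs <;> omega⟩

/-- The staircase (factorial) partition `[n]! = (n, n-1, …, 1)`. -/
def stair (n : ℕ) : YPart where
  f i := n - i
  mono := by intro i j hij; omega
  fin := ⟨n, fun i hi => by omega⟩

def yempty : YPart := rect 0 0

def Rectangular (π : YPart) : Prop := ∃ m n : ℕ, π = rect m n

end YPart


namespace YPart

lemma card_eq_sum (π : YPart) (N : ℕ) (hN : ∀ i, N ≤ i → π.f i = 0) :
    card π = ∑ i ∈ Finset.range N, π.f i := by
  apply tsum_eq_sum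
  intro b hb
  exact hN b (by simp at hb; omega)

lemma exists_dec (ρ π : YPart) (hle : ρ ≤ π) (hc : ρ.card + 1 = π.card) :
    ∃ a, π.f a = ρ.f a + 1 ∧ ∀ j, j ≠ a → π.f j = ρ.f j := by
  obtain ⟨N, hN⟩ := π.fin
  have hρN : ∀ i, N ≤ i → ρ.f i = 0 := fun i hi => by
    have h1 := hle i; have h2 := hN i hi; omega
  have h1 : card π = ∑ i ∈ Finset.range N, π.f i := card_eq_sum π N hN
  have h2 : card ρ = ∑ i ∈ Finset.range N, ρ.f i := card_eq_sum ρ N hρN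
  set g : ℕ → ℕ := fun i => π.f i - ρ.f i with hg
  have hsplit : ∀ i, π.f i = ρ.f i + g i := fun i => by
    have := hle i; simp only [hg]; omega
  have hsum : ∑ i ∈ Finset.range N, π.f i
      = (∑ i ∈ Finset.range N, ρ.f i) + ∑ i ∈ Finset.range N, g i := by
    rw [← Finset.sum_add_distrib]; exact Finset.sum_congr rfl fun i _ => hsplit i
  have hg1 : ∑ i ∈ Finset.range N, g i = 1 := by omega
  have hex : ∃ a ∈ Finset.range N, g a ≠ 0 :=
    Finset.exists_ne_zero_of_sum_ne_zero (by omega)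
  obtain ⟨a, ha, hga⟩ := hex
  have herase : ∑ i ∈ (Finset.range N).erase a, g i + g a = 1 := by
    rw [Finset.sum_erase_add _ _ ha]; exact hg1
  have hz : ∑ i ∈ (Finset.range N).erase a, g i = 0 := by omega
  refine ⟨a, by have := hsplit a; omega, fun j hj => ?_⟩
  by_cases hjN : j ∈ Finset.range N
  · have hj0 : g j = 0 :=
      (Finset.sum_eq_zero_iff).mp hz j (Finset.mem_erase.mpr ⟨hj, hjN⟩)
    have := hsplit j; omega
  · have hjN' : N ≤ j := by simp at hjN; omega
    rw [hN j hjN', hρN j hjN']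

lemma cover_of_descent (π : YPart) (i0 : ℕ) (hd : π.f (i0+1) < π.f i0) :
    ∃ ρ : YPart, ρ ≤ π ∧ ρ.card + 1 = π.card ∧ π.f i0 = ρ.f i0 + 1 ∧
      ∀ j, j ≠ i0 → ρ.f j = π.f j := by
  obtain ⟨N0, hN0⟩ := π.fin
  set N := max N0 (i0 + 1) with hNdef
  have hN : ∀ i, N ≤ i → π.f i = 0 := fun i hi => hN0 i (by omega)
  have hmono : ∀ i j : ℕ, i ≤ j →
      (π.f j - (if j = i0 then 1 else 0)) ≤ (π.f i - (if i = i0 then 1 else 0)) := by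
    intro i j hij
    have h1 := π.mono i j hij
    by_cases hii : i = i0
    · by_cases hj : j = i0
      · simp [hii, hj]
      · have hij1 : i0 + 1 ≤ j := by omega
        have h2 := π.mono (i0+1) j hij1
        have h3 : π.f i = π.f i0 := by rw [hii]
        rw [if_neg hj, if_pos hii]
        omega
    · split_ifs <;> omega
  have hfin : ∀ i, N ≤ i → (π.f i - (if i = i0 then 1 else 0)) = 0 := by
    intro i hi
    rw [hN i hi]
    exact Nat.zero_sub _
  refine ⟨⟨fun j => π.f j - (if j = i0 then 1 else 0),
    fun i j hij => hmono i j hij, ⟨N, fun i hi => hfin i hi⟩⟩, ?_, ?_, ?_, ?_⟩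
  · intro i
    show π.f i - (if i = i0 then 1 else 0) ≤ π.f i
    split_ifs <;> omega
  · have hcπ : card π = ∑ i ∈ Finset.range N, π.f i := card_eq_sum π N hN
    have hcρ : card ⟨fun j => π.f j - (if j = i0 then 1 else 0),
        fun i j hij => hmono i j hij, ⟨N, fun i hi => hfin i hi⟩⟩
        = ∑ i ∈ Finset.range N, (π.f i - (if i = i0 then 1 else 0)) :=
      card_eq_sum _ N hfin
    rw [hcρ, hcπ]
    have hsum : ∑ i ∈ Finset.range N, (π.f i - (if i = i0 then 1 else 0))
        + ∑ i ∈ Finset.range N, (if i = i0 then 1 else 0)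
        = ∑ i ∈ Finset.range N, π.f i := by
      rw [← Finset.sum_add_distrib]
      refine Finset.sum_congr rfl fun i _ => ?_
      split_ifs with hi
      · subst hi; omega
      · omega
    have hone : ∑ i ∈ Finset.range N, (if i = i0 then 1 else 0) = 1 := by
      rw [Finset.sum_ite_eq' (Finset.range N) i0 (fun _ => 1)]
      simp only [Finset.mem_range]
      rw [if_pos (by omega)]
    omega
  · show π.f i0 = π.f i0 - (if i0 = i0 then 1 else 0) + 1
    rw [if_pos rfl]
    omega
  · intro j hj
    show π.f j - (if j = i0 then 1 else 0) = π.f j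
    rw [if_neg hj]
    omega

lemma rect_struct (π : YPart) (n : ℕ) (hn : 1 ≤ n) (hc : card π = n)
    (hu : ∀ ρ1 ρ2 : YPart, (ρ1 ≤ π ∧ ρ1.card + 1 = n) → (ρ2 ≤ π ∧ ρ2.card + 1 = n) → ρ1 = ρ2) :
    ∃ (m k : ℕ) (ρ : YPart), 1 ≤ m ∧ 1 ≤ k ∧ n = m * k ∧
      (∀ i, π.f i = if i < m then k else 0) ∧
      (ρ ≤ π ∧ ρ.card + 1 = n) ∧
      (∀ i, ρ.f i = if i + 1 < m then k else if i + 1 = m then k - 1 else 0) := by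
  obtain ⟨N, hN⟩ := π.fin
  have hf0 : 0 < π.f 0 := by
    by_contra h0
    have hz : ∀ i, π.f i = 0 := fun i => by have := π.mono 0 i (Nat.zero_le i); omega
    have : card π = 0 := by rw [card_eq_sum π 0 (fun i _ => hz i)]; simp
    omega
  set P : ℕ → Prop := fun i => 0 < π.f i with hP
  have hP0 : P 0 := hf0
  set i0 := Nat.findGreatest P N with hi0
  have hPi0 : P i0 := Nat.findGreatest_spec (Nat.zero_le N) hP0
  have hzero : ∀ j, i0 < j → π.f j = 0 := by
    intro j hj
    by_cases hjN : j ≤ N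
    · have := Nat.findGreatest_is_greatest (P := P) hj hjN
      simp only [hP] at this
      omega
    · exact hN j (by omega)
  have hdesc : π.f (i0 + 1) < π.f i0 := by
    rw [hzero (i0+1) (by omega)]; exact hPi0
  obtain ⟨ρ, hρle, hρc, hρa, hρoff⟩ := cover_of_descent π i0 hdesc
  -- uniqueness of descent
  have honly : ∀ i, i ≠ i0 → π.f (i+1) = π.f i := by
    intro i hi
    by_contra hne
    have hd2 : π.f (i+1) < π.f i := by
      have := π.mono i (i+1) (by omega); omega
    obtain ⟨ρ', hρ'le, hρ'c, hρ'a, hρ'off⟩ := cover_of_descent π i hd2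
    have : ρ = ρ' := hu ρ ρ' ⟨hρle, by omega⟩ ⟨hρ'le, by omega⟩
    subst this
    have h1 := hρoff i hi
    omega
  set m := i0 + 1 with hm
  set k := π.f 0 with hk
  have hconst : ∀ i, i ≤ i0 → π.f i = k := by
    intro i hi
    induction i with
    | zero => rfl
    | succ j ih =>
      have hj : j ≠ i0 := by omega
      rw [honly j hj]
      exact ih (by omega)
  have hπf : ∀ i, π.f i = if i < m then k else 0 := by
    intro i
    by_cases hi : i < m
    · rw [if_pos hi]; exact hconst i (by omega)
    · rw [if_neg hi]; exact hzero i (by omega)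
  have hnmk : n = m * k := by
    have : card π = ∑ i ∈ Finset.range m, π.f i :=
      card_eq_sum π m (fun i hi => by rw [hπf i, if_neg (by omega)])
    rw [hc] at this
    rw [this]
    rw [Finset.sum_congr rfl (fun i hi => by
      rw [hπf i, if_pos (Finset.mem_range.mp hi)])]
    simp [mul_comm]
  refine ⟨m, k, ρ, by omega, hPi0.trans_le (by rw [hconst i0 le_rfl]), hnmk, hπf, ⟨hρle, by omega⟩, ?_⟩
  intro i
  by_cases h1 : i + 1 < m
  · rw [if_pos h1, hρoff i (by omega), hπf i, if_pos (by omega)]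
  · by_cases h2 : i + 1 = m
    · rw [if_neg h1, if_pos h2]
      have hi : i = i0 := by omega
      subst hi
      have := hconst i0 le_rfl
      omega
    · rw [if_neg h1, if_neg h2, hρoff i (by omega), hπf i, if_neg (by omega)]

end YPart

open YPart in
/-- Strong reconstruction: a partition of `n ≥ 4` is determined by its set of
lower covers. -/
theorem reconstruction_from_lower_covers (π σ : YPart) (n : ℕ) (h4 : 4 ≤ n)
    (hπ : card π = n) (hσ : card σ = n)
    (h : ∀ ρ : YPart, (ρ ≤ π ∧ ρ.card + 1 = n) ↔ (ρ ≤ σ ∧ ρ.card + 1 = n)) :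
    π = σ := by
  by_cases hAB : ∃ ρ1 ρ2 : YPart,
      (ρ1 ≤ π ∧ ρ1.card + 1 = n) ∧ (ρ2 ≤ π ∧ ρ2.card + 1 = n) ∧ ρ1 ≠ ρ2
  · obtain ⟨ρ1, ρ2, ⟨hl1, hc1⟩, ⟨hl2, hc2⟩, hne⟩ := hAB
    obtain ⟨hl1', hc1'⟩ := (h ρ1).mp ⟨hl1, hc1⟩
    obtain ⟨hl2', hc2'⟩ := (h ρ2).mp ⟨hl2, hc2⟩
    obtain ⟨a1, ha1, ha1'⟩ := exists_dec ρ1 π hl1 (by rw [hπ]; exact hc1)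
    obtain ⟨a2, ha2, ha2'⟩ := exists_dec ρ2 π hl2 (by rw [hπ]; exact hc2)
    obtain ⟨b1, hb1, hb1'⟩ := exists_dec ρ1 σ hl1' (by rw [hσ]; exact hc1')
    obtain ⟨b2, hb2, hb2'⟩ := exists_dec ρ2 σ hl2' (by rw [hσ]; exact hc2')
    have hna : a1 ≠ a2 := by
      rintro rfl
      apply hne
      apply ext'; funext j
      by_cases hj : j = a1
      · subst hj; omega
      · have h1 := ha1' j hj; have h2 := ha2' j hj; omega
    have hnb : b1 ≠ b2 := by
      rintro rfl
      apply hne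
      apply ext'; funext j
      by_cases hj : j = b1
      · subst hj; omega
      · have h1 := hb1' j hj; have h2 := hb2' j hj; omega
    apply ext'; funext i
    have e1 : (i = a1 ∧ π.f i = ρ1.f i + 1) ∨ (i ≠ a1 ∧ π.f i = ρ1.f i) := by
      by_cases hi : i = a1
      · exact Or.inl ⟨hi, by subst hi; exact ha1⟩
      · exact Or.inr ⟨hi, ha1' i hi⟩
    have e2 : (i = a2 ∧ π.f i = ρ2.f i + 1) ∨ (i ≠ a2 ∧ π.f i = ρ2.f i) := by
      by_cases hi : i = a2
      · exact Or.inl ⟨hi, by subst hi; exact ha2⟩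
      · exact Or.inr ⟨hi, ha2' i hi⟩
    have f1 : (i = b1 ∧ σ.f i = ρ1.f i + 1) ∨ (i ≠ b1 ∧ σ.f i = ρ1.f i) := by
      by_cases hi : i = b1
      · exact Or.inl ⟨hi, by subst hi; exact hb1⟩
      · exact Or.inr ⟨hi, hb1' i hi⟩
    have f2 : (i = b2 ∧ σ.f i = ρ2.f i + 1) ∨ (i ≠ b2 ∧ σ.f i = ρ2.f i) := by
      by_cases hi : i = b2
      · exact Or.inl ⟨hi, by subst hi; exact hb2⟩
      · exact Or.inr ⟨hi, hb2' i hi⟩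
    omega
  · push_neg at hAB
    have hu : ∀ ρ1 ρ2 : YPart,
        (ρ1 ≤ π ∧ ρ1.card + 1 = n) → (ρ2 ≤ π ∧ ρ2.card + 1 = n) → ρ1 = ρ2 :=
      fun ρ1 ρ2 h1 h2 => hAB ρ1 ρ2 h1 h2
    obtain ⟨m, k, ρ, hm, hk, hmk, hπf, hρcov, hρf⟩ :=
      rect_struct π n (by omega) hπ hu
    have huσ : ∀ ρ1 ρ2 : YPart,
        (ρ1 ≤ σ ∧ ρ1.card + 1 = n) → (ρ2 ≤ σ ∧ ρ2.card + 1 = n) → ρ1 = ρ2 :=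
      fun ρ1 ρ2 h1 h2 => hu ρ1 ρ2 ((h ρ1).mpr h1) ((h ρ2).mpr h2)
    obtain ⟨m', k', ρ', hm', hk', hmk', hσf, hρcov', hρf'⟩ :=
      rect_struct σ n (by omega) hσ huσ
    have hρρ : ρ = ρ' := huσ ρ ρ' ((h ρ).mp hρcov) hρcov'
    have he : ∀ i, (if i + 1 < m then k else if i + 1 = m then k - 1 else 0)
        = (if i + 1 < m' then k' else if i + 1 = m' then k' - 1 else 0) := by
      intro i
      rw [← hρf i, hρρ, hρf' i]
    have e0 := he 0
    have e1 := he 1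
    have hkey : m = m' ∧ k = k' := by
      rcases Nat.lt_or_ge 1 m with hm2 | hm1
      · rcases Nat.lt_or_ge 1 m' with hm2' | hm1'
        · have hkk : k = k' := by split_ifs at e0 <;> omega
          subst hkk
          refine ⟨?_, rfl⟩
          have hmm : m * k = m' * k := by rw [← hmk, ← hmk']
          exact Nat.eq_of_mul_eq_mul_right (by omega) hmm
        · exfalso
          have hm'1 : m' = 1 := by omega
          subst hm'1
          have e1' : k = 0 ∨ (m = 2 ∧ k = 1) := by split_ifs at e1 <;> omega
          rcases e1' with hk0 | ⟨hm2e, hk1e⟩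
          · subst hk0; omega
          · subst hm2e; subst hk1e; omega
      · rcases Nat.lt_or_ge 1 m' with hm2' | hm1'
        · exfalso
          have hm1e : m = 1 := by omega
          subst hm1e
          have e1' : k' = 0 ∨ (m' = 2 ∧ k' = 1) := by split_ifs at e1 <;> omega
          rcases e1' with hk0 | ⟨hm2e, hk1e⟩
          · subst hk0; omega
          · subst hm2e; subst hk1e; omega
        · have hm1e : m = 1 := by omega
          have hm1e' : m' = 1 := by omega
          subst hm1e; subst hm1e'
          refine ⟨rfl, ?_⟩
          split_ifs at e0 <;> omega
    obtain ⟨hmm, hkk⟩ := hkey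
    subst hmm; subst hkk
    apply ext'; funext i
    rw [hπf i, hσf i]
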